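/- For every x ∈ (0,1): x · ((c+1)d)/(a(c−b)) · ( (c/b)·W(x;a,b;c,d) − W(x;a,b+1;c+1,d) ) = W(x;a+1,b+1;d+1,c+2). (First component of the matrix identity x·Φ(x)·(W(x;a,b;c,d), W(x;a,b+1;c+1,d))ᵀ = (W(x;a+1,b+1;d+1,c+2), W(x;a+1,b+2;d+2,c+2))ᵀ.) -/

import Mathlib

open MeasureTheory Filter

/-- Pochhammer symbol `(z)_n = z (z+1) ⋯ (z+n-1)`. -/
noncomputable def poch (z : ℝ) (n : ℕ) : ℝ := ∏ i ∈ Finset.range n, (z + i)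

/-- Gauss hypergeometric series `₂F₁(α, β; γ; z)`. -/
noncomputable def twoF1 (α β γ z : ℝ) : ℝ :=
  ∑' n : ℕ, (poch α n * poch β n) / (poch γ n * n.factorial) * z ^ n

/-- The weight function `W(x; a, b; c, d)`. -/
noncomputable def W (a b c d : ℝ) (x : ℝ) : ℝ :=
  (Real.Gamma c * Real.Gamma d) /
      (Real.Gamma a * Real.Gamma b * Real.Gamma (c + d - a - b)) *
    (x ^ (a - 1) * (1 - x) ^ (c + d - a - b - 1) *
      twoF1 (c - b) (d - b) (c + d - a - b) (1 - x))

lemma poch_succ (z : ℝ) (n : ℕ) : poch z (n + 1) = poch z n * (z + n) :=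
  Finset.prod_range_succ _ _

lemma poch_succ' (z : ℝ) (n : ℕ) : poch z (n + 1) = z * poch (z + 1) n := by
  rw [poch, Finset.prod_range_succ', poch]
  push_cast
  rw [add_zero, mul_comm]
  congr 1
  apply Finset.prod_congr rfl
  intro i _
  ring

lemma poch_pos {z : ℝ} (hz : 0 < z) (n : ℕ) : 0 < poch z n :=
  Finset.prod_pos fun i _ => by positivity

lemma summable_hyp (α β γ z : ℝ) (hγ : 0 < γ) (hz : |z| < 1) :
    Summable (fun n : ℕ => poch α n * poch β n / (poch γ n * n.factorial) * z ^ n) := by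
  set f : ℕ → ℝ := fun n => poch α n * poch β n / (poch γ n * n.factorial) * z ^ n with hf
  set q : ℕ → ℝ := fun n => (α + n) * (β + n) * z / ((γ + n) * (n + 1)) with hq
  have key : ∀ n : ℕ, f (n + 1) = f n * q n := by
    intro n
    have h1 : (0:ℝ) < poch γ n := poch_pos hγ n
    have h2 : (0:ℝ) < γ + n := by positivity
    have h3 : (0:ℝ) < (n.factorial : ℝ) := by positivity
    have h4 : (0:ℝ) < (n:ℝ) + 1 := by positivity
    simp only [hf, hq, poch_succ, Nat.factorial_succ, pow_succ]
    push_cast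
    field_simp
  have h1 : Tendsto (fun n : ℕ => (n:ℝ) + 1) atTop atTop :=
    tendsto_atTop_add_const_right _ 1 tendsto_natCast_atTop_atTop
  have h2 : Tendsto (fun n : ℕ => γ + (n:ℝ)) atTop atTop :=
    tendsto_atTop_add_const_left _ γ tendsto_natCast_atTop_atTop
  have t1 : Tendsto (fun n : ℕ => (α + (n:ℝ)) / ((n:ℝ) + 1)) atTop (nhds 1) := by
    have he : ∀ n : ℕ, (α + (n:ℝ)) / ((n:ℝ) + 1) = 1 + (α - 1) / ((n:ℝ) + 1) := by
      intro n
      have hn : ((n:ℝ) + 1) ≠ 0 := by positivity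
      field_simp
      ring
    simp only [he]
    have h0 : Tendsto (fun n : ℕ => (α - 1) / ((n:ℝ) + 1)) atTop (nhds 0) :=
      Tendsto.div_atTop tendsto_const_nhds h1
    simpa using tendsto_const_nhds.add h0
  have t2 : Tendsto (fun n : ℕ => (β + (n:ℝ)) / (γ + (n:ℝ))) atTop (nhds 1) := by
    have he : ∀ᶠ n : ℕ in atTop, (β + (n:ℝ)) / (γ + (n:ℝ)) = 1 + (β - γ) / (γ + (n:ℝ)) := by
      filter_upwards with n
      have hn : (γ + (n:ℝ)) ≠ 0 := by positivity
      field_simp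
      ring
    have h0 : Tendsto (fun n : ℕ => (β - γ) / (γ + (n:ℝ))) atTop (nhds 0) :=
      Tendsto.div_atTop tendsto_const_nhds h2
    have hsum : Tendsto (fun n : ℕ => 1 + (β - γ) / (γ + (n:ℝ))) atTop (nhds (1 + 0)) :=
      Tendsto.add tendsto_const_nhds h0
    rw [add_zero] at hsum
    exact Tendsto.congr' (by filter_upwards [he] with n hn; rw [hn]) hsum
  have hqt : Tendsto q atTop (nhds z) := by
    have hqe : ∀ n : ℕ, q n = z * ((α + (n:ℝ)) / ((n:ℝ) + 1)) * ((β + (n:ℝ)) / (γ + (n:ℝ))) := by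
      intro n
      have hn1 : ((n:ℝ) + 1) ≠ 0 := by positivity
      have hn2 : (γ + (n:ℝ)) ≠ 0 := by positivity
      simp only [hq]
      field_simp
    have hprod : Tendsto (fun n : ℕ => z * ((α + (n:ℝ)) / ((n:ℝ) + 1)) *
        ((β + (n:ℝ)) / (γ + (n:ℝ)))) atTop (nhds (z * 1 * 1)) :=
      (Tendsto.mul tendsto_const_nhds t1).mul t2
    rw [mul_one, mul_one] at hprod
    exact Tendsto.congr (fun n => (hqe n).symm) hprod
  have hqabs : Tendsto (fun n => |q n|) atTop (nhds |z|) := hqt.abs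
  set r : ℝ := (1 + |z|) / 2 with hr
  have hrlt : r < 1 := by rw [hr]; linarith
  have hzr : |z| < r := by rw [hr]; linarith
  have hev : ∀ᶠ n in atTop, |q n| < r := hqabs.eventually_lt_const hzr
  apply summable_of_ratio_norm_eventually_le hrlt
  filter_upwards [hev] with n hn
  rw [key n, Real.norm_eq_abs, Real.norm_eq_abs, abs_mul]
  calc |f n| * |q n| ≤ |f n| * r := by
        apply mul_le_mul_of_nonneg_left hn.le (abs_nonneg _)
    _ = r * |f n| := mul_comm _ _

lemma twoF1_symm (α β γ z : ℝ) : twoF1 α β γ z = twoF1 β α γ z := by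
  unfold twoF1
  exact tsum_congr fun n => by ring

lemma contiguous (α β γ z : ℝ) (hγ : 0 < γ) (hz : |z| < 1) :
    twoF1 α β γ z - twoF1 α (β - 1) γ z = α * z / γ * twoF1 (α + 1) β (γ + 1) z := by
  have S1 := summable_hyp α β γ z hγ hz
  have S2 := summable_hyp α (β - 1) γ z hγ hz
  have S3 := summable_hyp (α + 1) β (γ + 1) z (by linarith) hz
  rw [twoF1, twoF1, twoF1, ← Summable.tsum_sub S1 S2]
  set g : ℕ → ℝ := fun n => poch α n * poch β n / (poch γ n * n.factorial) * z ^ n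
      - poch α n * poch (β - 1) n / (poch γ n * n.factorial) * z ^ n with hg
  have hSg : Summable g := S1.sub S2
  have h0 : g 0 = 0 := by simp [hg, poch]
  have hsucc : ∀ n : ℕ, g (n + 1) = α * z / γ *
      (poch (α + 1) n * poch β n / (poch (γ + 1) n * n.factorial) * z ^ n) := by
    intro n
    have h1 : (0:ℝ) < poch (γ + 1) n := poch_pos (by linarith) n
    have h3 : (0:ℝ) < (n.factorial : ℝ) := by positivity
    have hβ : poch (β - 1) (n + 1) = (β - 1) * poch β n := by
      rw [poch_succ']; norm_num
    simp only [hg, poch_succ' α, poch_succ' γ, poch_succ β, hβ, Nat.factorial_succ, pow_succ]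
    push_cast
    field_simp
    ring
  calc ∑' n, g n = g 0 + ∑' n, g (n + 1) := Summable.tsum_eq_zero_add hSg
    _ = ∑' n, α * z / γ *
        (poch (α + 1) n * poch β n / (poch (γ + 1) n * n.factorial) * z ^ n) := by
        rw [h0, zero_add]; exact tsum_congr hsucc
    _ = α * z / γ * ∑' n, poch (α + 1) n * poch β n / (poch (γ + 1) n * n.factorial) * z ^ n :=
        tsum_mul_left

/-- First component of the matrix identity
`x·Φ(x)·(W(x;a,b;c,d), W(x;a,b+1;c+1,d))ᵀ = (W(x;a+1,b+1;d+1,c+2), W(x;a+1,b+2;d+2,c+2))ᵀ`. -/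
theorem weight_shift_identity_first_component (a b c d : ℝ)
    (ha : 0 < a) (hb : 0 < b) (hc : 0 < c) (hd : 0 < d)
    (hcd : max a b < min c d) :
    ∀ x ∈ Set.Ioo (0 : ℝ) 1,
      x * (((c + 1) * d) / (a * (c - b))) *
          ((c / b) * W a b c d x - W a (b + 1) (c + 1) d x) =
        W (a + 1) (b + 1) (d + 1) (c + 2) x := by
  intro x hx
  obtain ⟨hx0, hx1⟩ := hx
  have hy0 : (0:ℝ) < 1 - x := by linarith
  have hz : |1 - x| < 1 := by rw [abs_of_pos hy0]; linarith
  have hac : a < c := lt_of_le_of_lt (le_max_left a b) (lt_of_lt_of_le hcd (min_le_left c d))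
  have hbc : b < c := lt_of_le_of_lt (le_max_right a b) (lt_of_lt_of_le hcd (min_le_left c d))
  have hbd : b < d := lt_of_le_of_lt (le_max_right a b) (lt_of_lt_of_le hcd (min_le_right c d))
  have hδ : (0:ℝ) < c + d - a - b := by linarith
  have hGa := Real.Gamma_pos_of_pos ha
  have hGb := Real.Gamma_pos_of_pos hb
  have hGc := Real.Gamma_pos_of_pos hc
  have hGd := Real.Gamma_pos_of_pos hd
  have hGδ := Real.Gamma_pos_of_pos hδ
  have hcont := contiguous (c - b) (d - b) (c + d - a - b) (1 - x) hδ hz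
  have hF2 : twoF1 (c - b) (d - b - 1) (c + d - a - b) (1 - x)
      = twoF1 (c - b) (d - b) (c + d - a - b) (1 - x)
        - (c - b) * (1 - x) / (c + d - a - b) *
            twoF1 (c - b + 1) (d - b) (c + d - a - b + 1) (1 - x) := by
    linarith [hcont]
  have hsymm : twoF1 (d - b) (c - b + 1) (c + d - a - b + 1) (1 - x)
      = twoF1 (c - b + 1) (d - b) (c + d - a - b + 1) (1 - x) := twoF1_symm _ _ _ _
  have hxa : x ^ a = x ^ (a - 1) * x := by
    rw [← Real.rpow_add_one hx0.ne' (a - 1)]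
    norm_num
  have hyδ : (1 - x) ^ (c + d - a - b) = (1 - x) ^ (c + d - a - b - 1) * (1 - x) := by
    rw [← Real.rpow_add_one hy0.ne' (c + d - a - b - 1)]
    norm_num
  simp only [W]
  rw [show c + 1 + d - a - (b + 1) = c + d - a - b by ring,
      show c + 1 - (b + 1) = c - b by ring,
      show d - (b + 1) = d - b - 1 by ring,
      show d + 1 + (c + 2) - (a + 1) - (b + 1) = c + d - a - b + 1 by ring,
      show d + 1 - (b + 1) = d - b by ring,
      show c + 2 - (b + 1) = c - b + 1 by ring,
      show a + 1 - 1 = a by ring,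
      show c + d - a - b + 1 - 1 = c + d - a - b by ring]
  rw [Real.Gamma_add_one ha.ne', Real.Gamma_add_one hb.ne', Real.Gamma_add_one hd.ne',
      show c + 2 = c + 1 + 1 by ring,
      Real.Gamma_add_one (by positivity : c + 1 ≠ 0), Real.Gamma_add_one hc.ne',
      Real.Gamma_add_one hδ.ne']
  rw [hF2, hsymm, hxa, hyδ]
  have hcb : c - b ≠ 0 := by linarith
  field_simp
  ring
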